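/- Let Φ ∈ ℝ^{n×p} with δ_k + θ_{k,k} < 1 (k-restricted isometry and (k,k)-restricted orthogonality constants). Then the null space of Φ contains no nonzero vector h satisfying ‖h_{T^c}‖₁ ≤ ‖h_T‖₁, where T is the index set of the k largest-magnitude components of h. In particular, Φ satisfies the null space property of order k. -/

import Mathlib

noncomputable def l2 {m : ℕ} (v : Fin m → ℝ) : ℝ := Real.sqrt (∑ i, (v i)^2)

def Sparse {m : ℕ} (k : ℕ) (v : Fin m → ℝ) : Prop :=
  ∃ s : Finset (Fin m), s.card ≤ k ∧ ∀ i ∉ s, v i = 0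

namespace NSPaux

noncomputable def sgn (x : ℝ) : ℝ := if 0 ≤ x then 1 else -1

lemma abs_sgn (x : ℝ) : |sgn x| = 1 := by
  rcases le_or_gt 0 x with h | h
  · rw [sgn, if_pos h]; norm_num
  · rw [sgn, if_neg (not_le.mpr h)]; norm_num

lemma sgn_mul_abs (x : ℝ) : sgn x * |x| = x := by
  rcases le_or_gt 0 x with h | h
  · rw [sgn, if_pos h, abs_of_nonneg h, one_mul]
  · rw [sgn, if_neg (not_le.mpr h), abs_of_neg h]; ring

noncomputable def tt {p : ℕ} (α : ℝ) (v : Fin p → ℝ) (a b : Fin p) : ℝ :=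
  min (|v b|) (α - |v a|)

noncomputable def W {p : ℕ} (α : ℝ) (v : Fin p → ℝ) (a b : Fin p) : Fin p → ℝ :=
  fun m => if m = a then v a + tt α v a b * sgn (v a)
           else if m = b then v b - tt α v a b * sgn (v b) else v m

noncomputable def Bset {p : ℕ} (α : ℝ) (v : Fin p → ℝ) : Finset (Fin p) :=
  Finset.univ.filter fun i => 0 < |v i| ∧ |v i| < α

lemma mem_Bset {p : ℕ} {α : ℝ} {v : Fin p → ℝ} {i : Fin p} :
    i ∈ Bset α v ↔ 0 < |v i| ∧ |v i| < α := by
  simp [Bset]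

lemma tt_pos {p : ℕ} {α : ℝ} {v : Fin p → ℝ} {a b : Fin p}
    (ha : |v a| < α) (hb : 0 < |v b|) : 0 < tt α v a b :=
  lt_min hb (by linarith)

lemma W_a {p : ℕ} (α : ℝ) (v : Fin p → ℝ) (a b : Fin p) :
    W α v a b a = v a + tt α v a b * sgn (v a) := by simp [W]

lemma W_b {p : ℕ} (α : ℝ) (v : Fin p → ℝ) {a b : Fin p} (hab : a ≠ b) :
    W α v a b b = v b - tt α v a b * sgn (v b) := by
  simp [W, hab, Ne.symm hab]

lemma W_other {p : ℕ} (α : ℝ) (v : Fin p → ℝ) {a b m : Fin p}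
    (hma : m ≠ a) (hmb : m ≠ b) : W α v a b m = v m := by
  simp [W, hma, hmb]

lemma abs_W_a {p : ℕ} {α : ℝ} {v : Fin p → ℝ} {a b : Fin p}
    (ht : 0 ≤ tt α v a b) : |W α v a b a| = |v a| + tt α v a b := by
  rw [W_a]
  have h1 : v a + tt α v a b * sgn (v a) = sgn (v a) * (|v a| + tt α v a b) := by
    rw [mul_add, sgn_mul_abs]; ring
  rw [h1, abs_mul, abs_sgn, one_mul, abs_of_nonneg (by positivity)]

lemma abs_W_b {p : ℕ} {α : ℝ} {v : Fin p → ℝ} {a b : Fin p} (hab : a ≠ b)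
    (ht : tt α v a b ≤ |v b|) : |W α v a b b| = |v b| - tt α v a b := by
  rw [W_b _ _ hab]
  have h1 : v b - tt α v a b * sgn (v b) = sgn (v b) * (|v b| - tt α v a b) := by
    rw [mul_sub, sgn_mul_abs]; ring
  rw [h1, abs_mul, abs_sgn, one_mul, abs_of_nonneg (by linarith)]

/-- Sum over all coordinates changes only at `a` and `b`. -/
lemma sum_abs_W {p : ℕ} {α : ℝ} {v : Fin p → ℝ} {a b : Fin p} (hab : a ≠ b)
    (ht0 : 0 ≤ tt α v a b) (ht : tt α v a b ≤ |v b|) :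
    (∑ m, |W α v a b m|) = ∑ m, |v m| := by
  classical
  have hbu : b ∈ Finset.univ.erase a := Finset.mem_erase.mpr ⟨Ne.symm hab, Finset.mem_univ b⟩
  have key : ∀ f : Fin p → ℝ, (∑ m, f m) =
      f a + (f b + ∑ m ∈ (Finset.univ.erase a).erase b, f m) := by
    intro f
    rw [Finset.add_sum_erase _ f hbu, Finset.add_sum_erase _ f (Finset.mem_univ a)]
  rw [key (fun m => |W α v a b m|), key (fun m => |v m|)]
  have hs : ∑ m ∈ (Finset.univ.erase a).erase b, |W α v a b m|
      = ∑ m ∈ (Finset.univ.erase a).erase b, |v m| := by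
    apply Finset.sum_congr rfl
    intro m hm
    have hma : m ≠ a := Finset.ne_of_mem_erase (Finset.mem_of_mem_erase hm)
    have hmb : m ≠ b := Finset.ne_of_mem_erase hm
    rw [W_other _ _ hma hmb]
  rw [hs, abs_W_a ht0, abs_W_b hab ht]
  ring

/-- The convex combination identity. -/
lemma combo {p : ℕ} {α : ℝ} {v : Fin p → ℝ} {a b : Fin p} (hab : a ≠ b)
    (h1 : 0 < tt α v a b) (h2 : 0 < tt α v b a) :
    v = (tt α v b a / (tt α v a b + tt α v b a)) • W α v a b
        + (tt α v a b / (tt α v a b + tt α v b a)) • W α v b a := by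
  have hsum : tt α v a b + tt α v b a ≠ 0 := by positivity
  funext m
  simp only [Pi.add_apply, Pi.smul_apply, smul_eq_mul]
  by_cases hma : m = a
  · subst hma
    rw [W_a, W_b _ _ (Ne.symm hab)]
    field_simp
    ring
  · by_cases hmb : m = b
    · subst hmb
      rw [W_b _ _ hab, W_a]
      field_simp
      ring
    · rw [W_other _ _ hma hmb, W_other _ _ hmb hma]
      field_simp
      ring

lemma Bset_W_lt {p : ℕ} {α : ℝ} {v : Fin p → ℝ} {a b : Fin p} (hab : a ≠ b)
    (ha : a ∈ Bset α v) (hb : b ∈ Bset α v) :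
    (Bset α (W α v a b)).card < (Bset α v).card := by
  classical
  obtain ⟨ha1, ha2⟩ := mem_Bset.mp ha
  obtain ⟨hb1, hb2⟩ := mem_Bset.mp hb
  have ht0 : 0 < tt α v a b := tt_pos ha2 hb1
  have htb : tt α v a b ≤ |v b| := min_le_left _ _
  have hsub : Bset α (W α v a b) ⊆ Bset α v := by
    intro m hm
    by_cases hma : m = a
    · subst hma; exact ha
    · by_cases hmb : m = b
      · subst hmb; exact hb
      · rw [mem_Bset] at hm ⊢
        rwa [W_other _ _ hma hmb] at hm
  apply Finset.card_lt_card
  rw [Finset.ssubset_iff_of_subset hsub]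
  rcases le_total (|v b|) (α - |v a|) with hc | hc
  · refine ⟨b, hb, ?_⟩
    rw [mem_Bset, abs_W_b hab htb]
    have : tt α v a b = |v b| := min_eq_left hc
    rw [this]
    simp
  · refine ⟨a, ha, ?_⟩
    rw [mem_Bset, abs_W_a ht0.le]
    have : tt α v a b = α - |v a| := min_eq_right hc
    rw [this]
    intro hcon
    linarith [hcon.2]

lemma abs_W_le {p : ℕ} {α : ℝ} {v : Fin p → ℝ} {a b : Fin p} (hab : a ≠ b)
    (ha : a ∈ Bset α v) (hb : b ∈ Bset α v) (hv : ∀ i, |v i| ≤ α) :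
    ∀ m, |W α v a b m| ≤ α := by
  obtain ⟨ha1, ha2⟩ := mem_Bset.mp ha
  obtain ⟨hb1, hb2⟩ := mem_Bset.mp hb
  have ht0 : 0 < tt α v a b := tt_pos ha2 hb1
  have htb : tt α v a b ≤ |v b| := min_le_left _ _
  intro m
  by_cases hma : m = a
  · rw [hma, abs_W_a ht0.le]
    have : tt α v a b ≤ α - |v a| := min_le_right _ _
    linarith
  · by_cases hmb : m = b
    · rw [hmb, abs_W_b hab htb]
      linarith [hv b]
    · rw [W_other _ _ hma hmb]; exact hv m

lemma supp_W {p : ℕ} {α : ℝ} {v : Fin p → ℝ} {a b : Fin p}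
    (ha : a ∈ Bset α v) (hb : b ∈ Bset α v) {Z : Finset (Fin p)}
    (hZ : ∀ i, v i ≠ 0 → i ∈ Z) : ∀ m, W α v a b m ≠ 0 → m ∈ Z := by
  obtain ⟨ha1, _⟩ := mem_Bset.mp ha
  obtain ⟨hb1, _⟩ := mem_Bset.mp hb
  intro m hm
  by_cases hma : m = a
  · rw [hma]; exact hZ a (abs_pos.mp ha1)
  · by_cases hmb : m = b
    · rw [hmb]; exact hZ b (abs_pos.mp hb1)
    · exact hZ m (by rwa [W_other _ _ hma hmb] at hm)

/-- Base case: at most one coordinate strictly between 0 and α forces k-sparsity. -/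
lemma base_case {p k : ℕ} {α : ℝ} (hα : 0 ≤ α) (v : Fin p → ℝ)
    (hcard : (Bset α v).card ≤ 1) (hbd : ∀ i, |v i| ≤ α)
    (hsum : (∑ i, |v i|) ≤ k * α) :
    Sparse k v ∧ l2 v ≤ Real.sqrt k * α := by
  classical
  constructor
  · -- Sparse
    rcases eq_or_lt_of_le hα with hα0 | hα0
    · -- α = 0 : v = 0
      refine ⟨∅, by simp, fun i _ => ?_⟩
      have h1 : |v i| ≤ 0 := by rw [hα0]; exact hbd i
      exact abs_nonpos_iff.mp h1
    · set A : Finset (Fin p) := Finset.univ.filter (fun i => α ≤ |v i|) with hA_def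
      have hAB : Disjoint A (Bset α v) := by
        rw [Finset.disjoint_left]
        intro i hiA hiB
        have h1 : α ≤ |v i| := (Finset.mem_filter.mp hiA).2
        have h2 := (mem_Bset.mp hiB).2
        linarith
      have hsum2 : ∑ i ∈ A ∪ Bset α v, |v i| ≤ (k : ℝ) * α := by
        refine le_trans ?_ hsum
        apply Finset.sum_le_sum_of_subset_of_nonneg (Finset.subset_univ _)
        intro i _ _; positivity
      have hAcard : (A.card : ℝ) * α ≤ ∑ i ∈ A, |v i| := by
        calc (A.card : ℝ) * α = ∑ _i ∈ A, α := by rw [Finset.sum_const, nsmul_eq_mul]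
        _ ≤ ∑ i ∈ A, |v i| := Finset.sum_le_sum (fun i hi => (Finset.mem_filter.mp hi).2)
      have hsupp : ∀ i, v i ≠ 0 → i ∈ A ∪ Bset α v := by
        intro i hi
        rcases lt_or_ge (|v i|) α with hlt | hge
        · exact Finset.mem_union_right _ (mem_Bset.mpr ⟨abs_pos.mpr hi, hlt⟩)
        · exact Finset.mem_union_left _ (Finset.mem_filter.mpr ⟨Finset.mem_univ i, hge⟩)
      refine ⟨A ∪ Bset α v, ?_, fun i hi => by_contra (fun hne => hi (hsupp i hne))⟩
      rw [Finset.card_union_of_disjoint hAB]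
      rcases (Bset α v).eq_empty_or_nonempty with hB | hB
      · rw [hB]
        simp only [Finset.card_empty, add_zero]
        have hAs : ∑ i ∈ A, |v i| ≤ (k : ℝ) * α := by
          rw [hB, Finset.union_empty] at hsum2; exact hsum2
        have h2 : (A.card : ℝ) * α ≤ (k : ℝ) * α := le_trans hAcard hAs
        have h3 := (mul_le_mul_iff_of_pos_right hα0).mp h2
        exact_mod_cast h3
      · obtain ⟨j, hj⟩ := hB
        have hBj : Bset α v = {j} :=
          Finset.eq_singleton_iff_unique_mem.mpr
            ⟨hj, fun x hx => by
              have := Finset.card_le_one.mp hcard x hx j hj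
              exact this⟩
        rw [hBj, Finset.card_singleton]
        have hjpos : 0 < |v j| := (mem_Bset.mp hj).1
        have hsum3 : ∑ i ∈ A ∪ Bset α v, |v i| = ∑ i ∈ A, |v i| + |v j| := by
          rw [Finset.sum_union hAB, hBj, Finset.sum_singleton]
        have h2 : (A.card : ℝ) * α < (k : ℝ) * α := by
          rw [hsum3] at hsum2; linarith
        have h3 : (A.card : ℝ) < k := (mul_lt_mul_iff_of_pos_right hα0).mp h2
        have h4 : A.card < k := by exact_mod_cast h3
        omega
  · -- l2 bound
    have h1 : (∑ i, (v i)^2) ≤ (k : ℝ) * α^2 := by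
      calc (∑ i, (v i)^2) ≤ ∑ i, |v i| * α := by
            apply Finset.sum_le_sum
            intro i _
            rw [← sq_abs]
            nlinarith [abs_nonneg (v i), hbd i]
      _ = (∑ i, |v i|) * α := by rw [← Finset.sum_mul]
      _ ≤ (k * α) * α := by
            apply mul_le_mul_of_nonneg_right hsum hα
      _ = (k : ℝ) * α^2 := by ring
    calc l2 v ≤ Real.sqrt ((k : ℝ) * α^2) := Real.sqrt_le_sqrt h1
    _ = Real.sqrt k * α := by
        rw [Real.sqrt_mul (Nat.cast_nonneg k), Real.sqrt_sq hα]

/-- Key lemma: induction on the number of coordinates strictly inside (0, α). -/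
lemma key {p k : ℕ} (F : (Fin p → ℝ) →ₗ[ℝ] ℝ) (Z : Finset (Fin p)) (α C : ℝ)
    (hα : 0 ≤ α)
    (hbase : ∀ v : Fin p → ℝ, (∀ i, v i ≠ 0 → i ∈ Z) → Sparse k v →
      l2 v ≤ Real.sqrt k * α → |F v| ≤ C) :
    ∀ (N : ℕ) (v : Fin p → ℝ), (Bset α v).card ≤ N →
      (∀ i, v i ≠ 0 → i ∈ Z) → (∀ i, |v i| ≤ α) → (∑ i, |v i|) ≤ k * α →
      |F v| ≤ C := by
  intro N
  induction N with
  | zero =>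
    intro v hc hZ hbd hsum
    have h1 : (Bset α v).card ≤ 1 := le_trans hc (by norm_num)
    obtain ⟨hsp, hl2⟩ := base_case hα v h1 hbd hsum
    exact hbase v hZ hsp hl2
  | succ N ih =>
    intro v hc hZ hbd hsum
    by_cases h1 : (Bset α v).card ≤ 1
    · obtain ⟨hsp, hl2⟩ := base_case hα v h1 hbd hsum
      exact hbase v hZ hsp hl2
    · push_neg at h1
      obtain ⟨a, ha, b, hb, hab⟩ := Finset.one_lt_card.mp h1
      have hab' : a ≠ b := hab
      obtain ⟨ha1, ha2⟩ := mem_Bset.mp ha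
      obtain ⟨hb1, hb2⟩ := mem_Bset.mp hb
      have ht1 : 0 < tt α v a b := tt_pos ha2 hb1
      have ht2 : 0 < tt α v b a := tt_pos hb2 ha1
      set t1 := tt α v a b
      set t2 := tt α v b a
      set W1 := W α v a b with hW1
      set W2 := W α v b a with hW2
      -- hypotheses for W1
      have hcard1 : (Bset α W1).card ≤ N := by
        have hlt : (Bset α W1).card < (Bset α v).card := by
          rw [hW1]; exact Bset_W_lt hab' ha hb
        omega
      have hcard2 : (Bset α W2).card ≤ N := by
        have hlt : (Bset α W2).card < (Bset α v).card := by
          rw [hW2]; exact Bset_W_lt (Ne.symm hab') hb ha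
        omega
      have hbd1 : ∀ m, |W1 m| ≤ α := abs_W_le hab' ha hb hbd
      have hbd2 : ∀ m, |W2 m| ≤ α := abs_W_le (Ne.symm hab') hb ha hbd
      have hsum1 : (∑ m, |W1 m|) ≤ k * α := by
        rw [sum_abs_W hab' ht1.le (min_le_left _ _)]; exact hsum
      have hsum2 : (∑ m, |W2 m|) ≤ k * α := by
        rw [sum_abs_W (Ne.symm hab') ht2.le (min_le_left _ _)]; exact hsum
      have hZ1 : ∀ m, W1 m ≠ 0 → m ∈ Z := supp_W ha hb hZ
      have hZ2 : ∀ m, W2 m ≠ 0 → m ∈ Z := supp_W hb ha hZ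
      have hF1 : |F W1| ≤ C := ih W1 hcard1 hZ1 hbd1 hsum1
      have hF2 : |F W2| ≤ C := ih W2 hcard2 hZ2 hbd2 hsum2
      have hco := combo hab' ht1 ht2
      set c1 := t2 / (t1 + t2) with hc1
      set c2 := t1 / (t1 + t2) with hc2
      have hc1p : 0 ≤ c1 := by positivity
      have hc2p : 0 ≤ c2 := by positivity
      have hc12 : c1 + c2 = 1 := by
        rw [hc1, hc2]
        field_simp
        ring
      have hFv : F v = c1 * F W1 + c2 * F W2 := by
        conv_lhs => rw [hco]
        simp [map_add, map_smul, smul_eq_mul]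
        rfl
      calc |F v| = |c1 * F W1 + c2 * F W2| := by rw [hFv]
      _ ≤ |c1 * F W1| + |c2 * F W2| := abs_add_le _ _
      _ = c1 * |F W1| + c2 * |F W2| := by
          rw [abs_mul, abs_mul, abs_of_nonneg hc1p, abs_of_nonneg hc2p]
      _ ≤ c1 * C + c2 * C := by
          apply add_le_add
          · exact mul_le_mul_of_nonneg_left hF1 hc1p
          · exact mul_le_mul_of_nonneg_left hF2 hc2p
      _ = C := by rw [← add_mul, hc12, one_mul]

end NSPaux

open NSPaux in
/-- Under `δ_k + θ_{k,k} < 1`, the null space of `Φ` contains no nonzero `h` with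
`‖h_{Tᶜ}‖₁ ≤ ‖h_T‖₁` for `T` the set of the `k` largest-magnitude entries of `h`:
the null space property of order `k` holds. -/
theorem null_space_property
    {n p k : ℕ} (Φ : Matrix (Fin n) (Fin p) ℝ) (δ θ : ℝ)
    (hδ0 : 0 ≤ δ) (hθ0 : 0 ≤ θ)
    (hδ : ∀ c : Fin p → ℝ, Sparse k c →
      Real.sqrt (1 - δ) * l2 c ≤ l2 (Φ.mulVec c) ∧
      l2 (Φ.mulVec c) ≤ Real.sqrt (1 + δ) * l2 c)
    (hθ : ∀ c c' : Fin p → ℝ, Sparse k c → Sparse k c' → (∀ i, c i = 0 ∨ c' i = 0) →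
      |dotProduct (Φ.mulVec c) (Φ.mulVec c')| ≤ θ * l2 c * l2 c')
    (hcond : δ + θ < 1) :
    ∀ h : Fin p → ℝ, Φ.mulVec h = 0 → h ≠ 0 →
      ∀ T : Finset (Fin p), T.card = k →
        (∀ i ∈ T, ∀ j ∉ T, |h j| ≤ |h i|) →
        ∑ i ∈ T, |h i| < ∑ i ∈ Tᶜ, |h i| := by
  classical
  intro h hΦh hne T hTcard hTmax
  by_contra hcon
  push_neg at hcon
  -- hcon : ∑ i ∈ Tᶜ, |h i| ≤ ∑ i ∈ T, |h i|
  -- case k = 0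
  rcases Nat.eq_zero_or_pos k with hk0 | hkpos
  · have hT0 : T = ∅ := Finset.card_eq_zero.mp (by rw [hTcard, hk0])
    apply hne
    funext i
    have h1 : ∑ i, |h i| ≤ 0 := by
      rw [hT0] at hcon; simpa using hcon
    have h3 : |h i| ≤ 0 :=
      le_trans (Finset.single_le_sum (f := fun i => |h i|)
        (fun i _ => abs_nonneg (h i)) (Finset.mem_univ i)) h1
    simpa using abs_nonpos_iff.mp h3
  -- now k ≥ 1
  set hT : Fin p → ℝ := fun i => if i ∈ T then h i else 0 with hT_def
  set hTc : Fin p → ℝ := fun i => if i ∈ T then 0 else h i with hTc_def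
  have hsplit : h = hT + hTc := by
    funext i
    simp only [hT_def, hTc_def, Pi.add_apply]
    by_cases hi : i ∈ T <;> simp [hi]
  set s := ∑ i ∈ T, |h i| with hs_def
  have hTne : T.Nonempty := Finset.card_pos.mp (by omega)
  have hs0 : 0 < s := by
    rcases (Finset.sum_nonneg (fun i _ => abs_nonneg (h i))).lt_or_eq with hlt | heq
    · exact hlt
    · exfalso
      apply hne
      funext i
      have hz : ∀ i ∈ T, h i = 0 := by
        intro i hi
        have := (Finset.sum_eq_zero_iff_of_nonneg
          (fun i _ => abs_nonneg (h i))).mp heq.symm i hi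
        simpa using this
      by_cases hi : i ∈ T
      · simpa using hz i hi
      · obtain ⟨i0, hi0⟩ := hTne
        have := hTmax i0 hi0 i hi
        rw [hz i0 hi0] at this
        simpa using abs_nonpos_iff.mp (by simpa using this)
  set α := s / k with hα_def
  have hkR : (0 : ℝ) < k := by exact_mod_cast hkpos
  have hα : 0 ≤ α := le_of_lt (div_pos hs0 hkR)
  -- F : linear functional
  set F : (Fin p → ℝ) →ₗ[ℝ] ℝ :=
    { toFun := fun v => dotProduct (Φ.mulVec hT) (Φ.mulVec v)
      map_add' := by
        intro x y
        simp [Matrix.mulVec_add, dotProduct_add]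
      map_smul' := by
        intro c x
        simp [Matrix.mulVec_smul, dotProduct_smul] }
    with hF_def
  have hTsp : Sparse k hT := ⟨T, le_of_eq hTcard, fun i hi => by simp [hT_def, hi]⟩
  -- l2 hT > 0
  have hl2T_sq : (l2 hT)^2 = ∑ i, (hT i)^2 := Real.sq_sqrt (by positivity)
  have hsumT_sq : ∑ i, (hT i)^2 = ∑ i ∈ T, (h i)^2 := by
    rw [← Finset.sum_subset (Finset.subset_univ T)]
    · apply Finset.sum_congr rfl
      intro i hi; simp [hT_def, hi]
    · intro i _ hi; simp [hT_def, hi]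
  have hl2T_pos : 0 < l2 hT := by
    obtain ⟨i0, hi0, hi0ne⟩ : ∃ i ∈ T, h i ≠ 0 := by
      by_contra hall
      push_neg at hall
      have : s = 0 := Finset.sum_eq_zero (fun i hi => by rw [hall i hi]; simp)
      linarith
    apply Real.sqrt_pos.mpr
    have h1 : 0 < (h i0)^2 := by positivity
    rw [hsumT_sq]
    exact lt_of_lt_of_le h1 (Finset.single_le_sum (f := fun i => (h i)^2)
      (fun i _ => sq_nonneg _) hi0)
  -- Cauchy-Schwarz: s ≤ √k * l2 hT
  have hCS : s ≤ Real.sqrt k * l2 hT := by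
    have h1 : s^2 ≤ (k : ℝ) * ∑ i ∈ T, (h i)^2 := by
      have := sq_sum_le_card_mul_sum_sq (s := T) (f := fun i => |h i|)
      simp only [sq_abs] at this
      rw [hTcard] at this
      exact_mod_cast this
    have h2 : s^2 ≤ (Real.sqrt k * l2 hT)^2 := by
      rw [mul_pow, Real.sq_sqrt (Nat.cast_nonneg k), hl2T_sq, hsumT_sq]
      exact h1
    have h3 : 0 ≤ Real.sqrt k * l2 hT := by positivity
    nlinarith [hs0.le]
  have hsqrtk_pos : 0 < Real.sqrt k := Real.sqrt_pos.mpr hkR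
  have hska : Real.sqrt k * α ≤ l2 hT := by
    have hkk : Real.sqrt k * Real.sqrt k = (k : ℝ) :=
      Real.mul_self_sqrt (Nat.cast_nonneg k)
    rw [hα_def]
    have h0 : Real.sqrt k * (s / k) = s / Real.sqrt k := by
      rw [eq_div_iff (ne_of_gt hsqrtk_pos)]
      calc Real.sqrt k * (s / k) * Real.sqrt k
          = (Real.sqrt k * Real.sqrt k) * (s / k) := by ring
      _ = (k : ℝ) * (s / k) := by rw [hkk]
      _ = s := by field_simp
    rw [h0, div_le_iff₀ hsqrtk_pos]
    calc s ≤ Real.sqrt k * l2 hT := hCS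
    _ = l2 hT * Real.sqrt k := mul_comm _ _
  -- base bound for key lemma
  set C := θ * l2 hT * (Real.sqrt k * α) with hC_def
  have hbase : ∀ v : Fin p → ℝ, (∀ i, v i ≠ 0 → i ∈ Tᶜ) → Sparse k v →
      l2 v ≤ Real.sqrt k * α → |F v| ≤ C := by
    intro v hvZ hvsp hvl2
    have hdisj : ∀ i, hT i = 0 ∨ v i = 0 := by
      intro i
      by_cases hvi : v i = 0
      · right; exact hvi
      · left
        have := hvZ i hvi
        rw [Finset.mem_compl] at this
        simp [hT_def, this]
    have h1 := hθ hT v hTsp hvsp hdisj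
    calc |F v| ≤ θ * l2 hT * l2 v := h1
    _ ≤ θ * l2 hT * (Real.sqrt k * α) := by
        apply mul_le_mul_of_nonneg_left hvl2
        have : 0 ≤ l2 hT := Real.sqrt_nonneg _
        positivity
  -- hypotheses on hTc for key
  have hTcZ : ∀ i, hTc i ≠ 0 → i ∈ Tᶜ := by
    intro i hi
    rw [Finset.mem_compl]
    intro hiT
    apply hi
    simp [hTc_def, hiT]
  have hTcbd : ∀ i, |hTc i| ≤ α := by
    intro i
    by_cases hi : i ∈ T
    · simp [hTc_def, hi, hα]
    · have h1 : ∀ j ∈ T, |h i| ≤ |h j| := fun j hj => hTmax j hj i hi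
      have h2 : (k : ℝ) * |h i| ≤ s := by
        calc (k : ℝ) * |h i| = ∑ _j ∈ T, |h i| := by
              rw [Finset.sum_const, nsmul_eq_mul, hTcard]
        _ ≤ ∑ j ∈ T, |h j| := Finset.sum_le_sum (fun j hj => h1 j hj)
      have h3 : |h i| ≤ s / k := by
        rw [le_div_iff₀ hkR]; linarith
      simpa [hTc_def, hi] using h3
  have hTcsum : (∑ i, |hTc i|) ≤ k * α := by
    have h1 : (∑ i, |hTc i|) = ∑ i ∈ Tᶜ, |h i| := by
      rw [← Finset.sum_add_sum_compl T (fun i => |hTc i|)]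
      have h2 : ∑ i ∈ T, |hTc i| = 0 :=
        Finset.sum_eq_zero (fun i hi => by simp [hTc_def, hi])
      have h3 : ∑ i ∈ Tᶜ, |hTc i| = ∑ i ∈ Tᶜ, |h i| := by
        apply Finset.sum_congr rfl
        intro i hi
        rw [Finset.mem_compl] at hi
        simp [hTc_def, hi]
      rw [h2, h3, zero_add]
    rw [h1, hα_def]
    calc ∑ i ∈ Tᶜ, |h i| ≤ s := hcon
    _ = (k : ℝ) * (s / k) := by field_simp
  -- apply key
  have hFtc : |F hTc| ≤ C :=
    key F Tᶜ α C hα hbase (Bset α hTc).card hTc le_rfl hTcZ hTcbd hTcsum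
  -- F hT = ‖Φ hT‖²
  have hFhT : F hT = (l2 (Φ.mulVec hT))^2 := by
    rw [hF_def]
    simp only [LinearMap.coe_mk, AddHom.coe_mk]
    have h2 : (l2 (Φ.mulVec hT))^2 = ∑ i, (Φ.mulVec hT i)^2 :=
      Real.sq_sqrt (by positivity)
    rw [h2]
    simp [dotProduct, pow_two]
  have hFsum : F hT + F hTc = 0 := by
    have : F hT + F hTc = F h := by rw [hsplit, map_add]
    rw [this, hF_def]
    simp only [LinearMap.coe_mk, AddHom.coe_mk]
    rw [hΦh, dotProduct_zero]
  -- lower bound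
  have hδ1 : 0 ≤ 1 - δ := by linarith
  have hlow : (1 - δ) * (l2 hT)^2 ≤ (l2 (Φ.mulVec hT))^2 := by
    have h1 := (hδ hT hTsp).1
    have h2 : 0 ≤ Real.sqrt (1 - δ) * l2 hT := by positivity
    calc (1 - δ) * (l2 hT)^2 = (Real.sqrt (1 - δ) * l2 hT)^2 := by
          rw [mul_pow, Real.sq_sqrt hδ1]
    _ ≤ (l2 (Φ.mulVec hT))^2 := by
          apply pow_le_pow_left₀ h2 h1
  have hupp : (l2 (Φ.mulVec hT))^2 ≤ θ * (l2 hT)^2 := by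
    have h1 : (l2 (Φ.mulVec hT))^2 = -F hTc := by
      rw [← hFhT]; linarith
    rw [h1]
    calc -F hTc ≤ |F hTc| := neg_le_abs _
    _ ≤ C := hFtc
    _ ≤ θ * (l2 hT)^2 := by
        rw [hC_def]
        have : θ * l2 hT * (Real.sqrt k * α) ≤ θ * l2 hT * l2 hT := by
          apply mul_le_mul_of_nonneg_left hska
          positivity
        calc θ * l2 hT * (Real.sqrt k * α) ≤ θ * l2 hT * l2 hT := this
        _ = θ * (l2 hT)^2 := by ring
  have hfinal : 1 - δ ≤ θ := by
    have h1 : (1 - δ) * (l2 hT)^2 ≤ θ * (l2 hT)^2 := le_trans hlow hupp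
    have h2 : 0 < (l2 hT)^2 := by positivity
    exact le_of_mul_le_mul_right (by linarith [h1]) h2
  linarith
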